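/- Let X be uniform on S², R independent with cos R uniform on [-1,1], and B = {z ∈ S² : d_{S²}(z,X) ≤ R}. Then for all x, y ∈ S²: P(x ∈ B, y ∈ B) = 1/2 - (1/4)·sin(d_{S²}(x,y)/2). -/

import Mathlib

open MeasureTheory ProbabilityTheory

open Real Set Metric
noncomputable section

local notation "E3" => EuclideanSpace ℝ (Fin 3)

lemma gauss1d_exp : ∫ t : ℝ, Real.exp (-t^2) = Real.sqrt π := by
  have := integral_gaussian 1
  simpa using this

lemma gauss1d_lin : ∫ t : ℝ, t * Real.exp (-t^2) = 0 := by
  have h := integral_neg_eq_self (fun t : ℝ => t * Real.exp (-t^2)) (volume : Measure ℝ)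
  simp only [neg_sq, neg_mul] at h
  have h2 : ∫ t : ℝ, -(t * Real.exp (-t^2)) = -∫ t : ℝ, t * Real.exp (-t^2) := integral_neg _
  rw [h2] at h
  linarith

lemma ioi_lin : ∫ t in Ioi (0:ℝ), t * Real.exp (-t^2) = 1/2 := by
  have h := integral_rpow_mul_exp_neg_rpow (p := 2) (q := 1) (by norm_num) (by norm_num)
  rw [setIntegral_congr_fun measurableSet_Ioi (g := fun t : ℝ => t ^ (1:ℝ) * Real.exp (-t ^ (2:ℝ)))
    (fun t ht => by
      show t * Real.exp (-t^2) = t ^ (1:ℝ) * Real.exp (-t ^ (2:ℝ))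
      rw [Real.rpow_one, show (2:ℝ) = ((2:ℕ):ℝ) by norm_num, Real.rpow_natCast])]
  rw [h]
  norm_num [Real.Gamma_one]

lemma gauss1d_abs : ∫ t : ℝ, |t| * Real.exp (-t^2) = 1 := by
  have h : ∫ t : ℝ, |t| * Real.exp (-|t|^2) = 2 * ∫ t in Ioi (0:ℝ), t * Real.exp (-t^2) :=
    integral_comp_abs (f := fun t => t * Real.exp (-t^2))
  simp only [sq_abs] at h
  rw [h, ioi_lin]; norm_num

lemma ioi_cubic : ∫ t in Ioi (0:ℝ), t^2 * (t * Real.exp (-t^2)) = 1/2 := by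
  have h := integral_rpow_mul_exp_neg_rpow (p := 2) (q := 3) (by norm_num) (by norm_num)
  rw [setIntegral_congr_fun measurableSet_Ioi (g := fun t : ℝ => t ^ (3:ℝ) * Real.exp (-t ^ (2:ℝ)))
    (fun t ht => by
      show t^2 * (t * Real.exp (-t^2)) = t ^ (3:ℝ) * Real.exp (-t ^ (2:ℝ))
      rw [show (2:ℝ) = ((2:ℕ):ℝ) by norm_num, show (3:ℝ) = ((3:ℕ):ℝ) by norm_num,
        Real.rpow_natCast, Real.rpow_natCast]
      ring)]
  rw [h, show ((3:ℝ)+1)/2 = ((1:ℕ):ℝ)+1 by norm_num, Real.Gamma_nat_eq_factorial]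
  norm_num


lemma integral_volumeIoiPow (n : ℕ) (f : ℝ → ℝ) :
    ∫ r : Ioi (0:ℝ), f r ∂(Measure.volumeIoiPow n) = ∫ r in Ioi (0:ℝ), r ^ n * f r := by
  simp only [Measure.volumeIoiPow, ENNReal.ofReal]
  rw [integral_withDensity_eq_integral_smul
      ((measurable_subtype_coe.pow_const _).real_toNNReal) _,
    integral_subtype_comap measurableSet_Ioi fun a ↦ Real.toNNReal (a ^ n) • f a,
    setIntegral_congr_fun measurableSet_Ioi (fun x hx => ?_)]
  rw [NNReal.smul_def, Real.coe_toNNReal _ (pow_nonneg hx.out.le _), smul_eq_mul]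


lemma exp_norm_sq (x : E3) : Real.exp (-‖x‖^2) = ∏ i, Real.exp (-(x i)^2) := by
  rw [EuclideanSpace.norm_eq, Real.sq_sqrt (by positivity), ← Real.exp_sum]
  congr 1
  rw [← Finset.sum_neg_distrib]
  congr 1; ext i; rw [Real.norm_eq_abs, sq_abs]

lemma coord_int (g : ℝ → ℝ) :
    ∫ x : E3, g (x 0) * Real.exp (-‖x‖^2) =
      (∫ t : ℝ, g t * Real.exp (-t^2)) * (Real.sqrt π)^2 := by
  have hmp := EuclideanSpace.volume_preserving_symm_measurableEquiv_toLp (Fin 3)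
  set F : (Fin 3 → ℝ) → ℝ := fun y => ∏ j, (if j = 0 then g (y j) * Real.exp (-(y j)^2)
      else Real.exp (-(y j)^2)) with hF
  have key := hmp.integral_comp (MeasurableEquiv.toLp 2 (Fin 3 → ℝ)).symm.measurableEmbedding F
  have h1 : ∀ x : E3, F ((MeasurableEquiv.toLp 2 (Fin 3 → ℝ)).symm x) =
      g (x 0) * Real.exp (-‖x‖^2) := by
    intro x
    have hx : ∀ j, ((MeasurableEquiv.toLp 2 (Fin 3 → ℝ)).symm x) j = x j := fun j => rfl
    rw [hF]
    simp only [hx]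
    rw [exp_norm_sq x, Fin.prod_univ_three, Fin.prod_univ_three]
    rw [if_pos rfl, if_neg (by decide : ¬(1:Fin 3)=0), if_neg (by decide : ¬(2:Fin 3)=0)]
    ring
  rw [integral_congr_ae (Filter.Eventually.of_forall h1)] at key
  rw [key, hF]; beta_reduce; rw [volume_pi, MeasureTheory.integral_fintype_prod_eq_prod (𝕜 := ℝ) (ι := Fin 3)
    (fun j t => if j = 0 then g t * Real.exp (-t^2) else Real.exp (-t^2)),
    Fin.prod_univ_three]
  simp only [reduceIte, if_neg (show ¬((1:Fin 3) = 0) by decide), if_neg (show ¬((2:Fin 3) = 0) by decide)]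
  rw [show ∫ t : ℝ, Real.exp (-t^2) = Real.sqrt π by
      have := integral_gaussian 1; simpa using this]
  ring


lemma polar_eq (f : E3 → ℝ)
    (hhom : ∀ (c : ℝ) (x : E3), 0 ≤ c → f (c • x) = c * f x) :
    ∫ x : E3, f x * Real.exp (-‖x‖^2) =
      (∫ z : sphere (0:E3) 1, f z ∂((volume : Measure E3).toSphere)) * (1/2) := by
  have hdim : Module.finrank ℝ E3 = 3 := finrank_euclideanSpace_fin
  have key := (Measure.measurePreserving_homeomorphUnitSphereProd
      (volume : Measure E3)).integral_comp (Homeomorph.measurableEmbedding _)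
      (fun p : sphere (0:E3) 1 × Ioi (0:ℝ) => f p.1 * ((p.2 : ℝ) * Real.exp (-(p.2:ℝ)^2)))
  rw [hdim] at key
  have hcomp : ∀ x : ({0}ᶜ : Set E3),
      f (homeomorphUnitSphereProd E3 x).1 *
        (((homeomorphUnitSphereProd E3 x).2 : ℝ) *
          Real.exp (-((homeomorphUnitSphereProd E3 x).2:ℝ)^2)) =
      f x.1 * Real.exp (-‖x.1‖^2) := by
    intro x
    have hx : (x : E3) ≠ 0 := x.2
    simp only [homeomorphUnitSphereProd_apply_fst_coe, homeomorphUnitSphereProd_apply_snd_coe]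
    have : f ((x:E3)) = ‖(x:E3)‖ * f (‖(x:E3)‖⁻¹ • (x:E3)) := by
      rw [← hhom _ _ (norm_nonneg _), smul_inv_smul₀ (norm_ne_zero_iff.2 hx)]
    rw [this]; ring
  calc ∫ x : E3, f x * Real.exp (-‖x‖^2)
      = ∫ x : ({0}ᶜ : Set E3), f x.1 * Real.exp (-‖x.1‖^2) ∂((volume : Measure E3).comap (↑)) := by
        rw [integral_subtype_comap (MeasurableSet.singleton (0:E3)).compl
          (fun x : E3 => f x * Real.exp (-‖x‖^2)), restrict_compl_singleton]
    _ = ∫ x : ({0}ᶜ : Set E3),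
          f (homeomorphUnitSphereProd E3 x).1 *
            (((homeomorphUnitSphereProd E3 x).2 : ℝ) *
              Real.exp (-((homeomorphUnitSphereProd E3 x).2:ℝ)^2))
          ∂((volume : Measure E3).comap (↑)) :=
        (integral_congr_ae (Filter.Eventually.of_forall hcomp)).symm
    _ = ∫ p : sphere (0:E3) 1 × Ioi (0:ℝ), f p.1 * ((p.2 : ℝ) * Real.exp (-(p.2:ℝ)^2))
          ∂(((volume : Measure E3).toSphere).prod (Measure.volumeIoiPow 2)) := key
    _ = (∫ z : sphere (0:E3) 1, f z ∂((volume : Measure E3).toSphere)) *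
          ∫ r : Ioi (0:ℝ), (r:ℝ) * Real.exp (-(r:ℝ)^2) ∂(Measure.volumeIoiPow 2) :=
        integral_prod_mul (fun z : sphere (0:E3) 1 => f z) (fun r : Ioi (0:ℝ) => (r:ℝ) * Real.exp (-(r:ℝ)^2))
    _ = (∫ z : sphere (0:E3) 1, f z ∂((volume : Measure E3).toSphere)) * (1/2) := by
        rw [integral_volumeIoiPow 2 (fun t => t * Real.exp (-t^2)), ioi_cubic]


lemma inner_gauss (g : ℝ → ℝ) (hgh : ∀ (c t : ℝ), 0 ≤ c → g (c * t) = c * g t) (v : E3) :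
    ∫ x : E3, g (inner ℝ v x : ℝ) * Real.exp (-‖x‖^2) =
      ‖v‖ * ((∫ t : ℝ, g t * Real.exp (-t^2)) * (Real.sqrt π)^2) := by
  rcases eq_or_ne v 0 with rfl | hv
  · have hg0 : g 0 = 0 := by have := hgh 0 0 le_rfl; simpa using this
    simp [hg0]
  · set u : E3 := ‖v‖⁻¹ • v with hu
    have hun : ‖u‖ = 1 := by
      rw [hu, norm_smul, norm_inv, norm_norm, inv_mul_cancel₀ (norm_ne_zero_iff.2 hv)]
    have he0n : ‖EuclideanSpace.single (0 : Fin 3) (1:ℝ)‖ = 1 := by simp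
    set T := Submodule.reflection (ℝ ∙ (EuclideanSpace.single (0 : Fin 3) (1:ℝ) - u))ᗮ with hT
    have hTe0 : T (EuclideanSpace.single (0 : Fin 3) (1:ℝ)) = u :=
      Submodule.reflection_sub (by rw [he0n, hun])
    have hmp : MeasurePreserving T (volume : Measure E3) volume := T.measurePreserving
    have key := hmp.integral_comp T.toHomeomorph.measurableEmbedding
      (fun x : E3 => g (inner ℝ v x : ℝ) * Real.exp (-‖x‖^2))
    have h1 : ∀ x : E3, g (inner ℝ v (T x) : ℝ) * Real.exp (-‖T x‖^2)
        = (fun t => ‖v‖ * g t) (x 0) * Real.exp (-‖x‖^2) := by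
      intro x
      have hv' : v = ‖v‖ • u := by rw [hu, smul_inv_smul₀ (norm_ne_zero_iff.2 hv)]
      have h3 : (inner ℝ u (T x) : ℝ) = x 0 := by
        conv_lhs => rw [← hTe0]
        rw [T.inner_map_map, EuclideanSpace.inner_single_left]
        simp
      have h4 : (inner ℝ v (T x) : ℝ) = ‖v‖ * x 0 := by
        conv_lhs => rw [hv']
        rw [real_inner_smul_left, h3]
      rw [h4, T.norm_map, hgh _ _ (norm_nonneg v)]
    rw [integral_congr_ae (Filter.Eventually.of_forall h1)] at key
    rw [← key, coord_int (fun t => ‖v‖ * g t)]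
    rw [show ∫ t : ℝ, ‖v‖ * g t * Real.exp (-t^2) = ‖v‖ * ∫ t : ℝ, g t * Real.exp (-t^2) by
      rw [← integral_const_mul]; congr 1; ext t; ring]
    ring


lemma sphere_inner_zero (v : E3) :
    ∫ z : sphere (0:E3) 1, (inner ℝ v (z:E3) : ℝ) ∂((volume : Measure E3).toSphere) = 0 := by
  have h1 := polar_eq (fun x => (inner ℝ v x : ℝ))
    (fun c x hc => by show (inner ℝ v (c • x) : ℝ) = _; rw [real_inner_smul_right])
  have h2 := inner_gauss (fun t => t) (fun c t hc => rfl) v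
  rw [h1] at h2
  have h3 : (∫ z : sphere (0:E3) 1, (inner ℝ v (z:E3) : ℝ) ∂((volume : Measure E3).toSphere))
      * (1/2) = 0 := by rw [h2, gauss1d_lin]; ring
  linarith [h3]

lemma sphere_inner_abs (v : E3) :
    ∫ z : sphere (0:E3) 1, |(inner ℝ v (z:E3) : ℝ)| ∂((volume : Measure E3).toSphere)
      = 2 * π * ‖v‖ := by
  have h1 := polar_eq (fun x => |(inner ℝ v x : ℝ)|)
    (fun c x hc => by
      show |(inner ℝ v (c • x) : ℝ)| = _
      rw [real_inner_smul_right, abs_mul, abs_of_nonneg hc])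
  have h2 := inner_gauss (fun t => |t|) (fun c t hc => by
      show |c * t| = c * |t|
      rw [abs_mul, abs_of_nonneg hc]) v
  rw [h1] at h2
  rw [gauss1d_abs, Real.sq_sqrt pi_pos.le] at h2
  linarith [h2]

lemma toSphere_univ_E3 :
    ((volume : Measure E3).toSphere) (univ : Set (sphere (0:E3) 1))
      = ENNReal.ofReal (4 * π) := by
  rw [Measure.toSphere_apply_univ, finrank_euclideanSpace_fin, EuclideanSpace.volume_ball (ι := Fin 3) 0 1]
  rw [show (Fintype.card (Fin 3)) = 3 from by simp]
  have hG : Real.Gamma ((3:ℕ)/2 + 1) = 3/4 * Real.sqrt π := by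
    rw [show ((3:ℕ):ℝ)/2 + 1 = (3/2 : ℝ) + 1 from by norm_num,
      Real.Gamma_add_one (by norm_num),
      show (3:ℝ)/2 = 1/2 + 1 from by norm_num, Real.Gamma_add_one (by norm_num),
      Real.Gamma_one_half_eq]
    ring
  rw [hG, ENNReal.ofReal_one, one_pow, one_mul]
  have h4 : Real.sqrt π ^ 3 / (3/4 * Real.sqrt π) = 4/3 * π := by
    have hs : Real.sqrt π > 0 := Real.sqrt_pos.2 pi_pos
    have h5 : Real.sqrt π ^ 3 = π * Real.sqrt π := by
      rw [pow_succ, sq, Real.mul_self_sqrt pi_pos.le]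
    rw [h5]
    field_simp
  rw [h4]
  rw [show ((3:ℕ) : ENNReal) = ENNReal.ofReal (3:ℝ) from by simp,
    ← ENNReal.ofReal_mul (by norm_num)]
  congr 1
  ring


lemma arccos_le_iff_cos_le {a r : ℝ} (ha1 : -1 ≤ a) (ha2 : a ≤ 1)
    (hr0 : 0 ≤ r) (hrπ : r ≤ π) : Real.arccos a ≤ r ↔ Real.cos r ≤ a := by
  constructor
  · intro h
    have := Real.cos_le_cos_of_nonneg_of_le_pi (Real.arccos_nonneg a) hrπ h
    rwa [Real.cos_arccos ha1 ha2] at this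
  · intro h
    by_contra hc
    push_neg at hc
    have := Real.strictAntiOn_cos ⟨hr0, hrπ⟩ ⟨Real.arccos_nonneg a, Real.arccos_le_pi a⟩ hc
    rw [Real.cos_arccos ha1 ha2] at this
    linarith

/-- Let `X` be uniform on `S²`, `R` independent of `X` with values in `[0, π]` and `cos R`
uniform on `[-1,1]`, and `B = {z ∈ S² : d_{S²}(z,X) ≤ R}` the random spherical cap.  Then for
all `x, y ∈ S²`: `P(x ∈ B, y ∈ B) = 1/2 - (1/4)·sin(d_{S²}(x,y)/2)`, where
`d_{S²}(x,y) = arccos⟨x,y⟩`. -/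
theorem stmt18 {Ω : Type*} [MeasurableSpace Ω] (P : Measure Ω) [IsProbabilityMeasure P]
    (X : Ω → Metric.sphere (0 : EuclideanSpace ℝ (Fin 3)) 1) (hX : Measurable X)
    (R : Ω → ℝ) (hR : Measurable R) (hRrange : ∀ ω, R ω ∈ Set.Icc 0 Real.pi)
    (hXunif : Measure.map X P =
      (((volume : Measure (EuclideanSpace ℝ (Fin 3))).toSphere Set.univ)⁻¹ •
        (volume : Measure (EuclideanSpace ℝ (Fin 3))).toSphere))
    (hRunif : Measure.map (fun ω => Real.cos (R ω)) P =
      (2 : ENNReal)⁻¹ • volume.restrict (Set.Icc (-1 : ℝ) 1))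
    (hindep : IndepFun X R P)
    (x y : EuclideanSpace ℝ (Fin 3)) (hx : ‖x‖ = 1) (hy : ‖y‖ = 1) :
    (P {ω | Real.arccos (inner ℝ x ((X ω : EuclideanSpace ℝ (Fin 3))) : ℝ) ≤ R ω ∧
        Real.arccos (inner ℝ y ((X ω : EuclideanSpace ℝ (Fin 3))) : ℝ) ≤ R ω}).toReal =
      1 / 2 - (1 / 4) * Real.sin (Real.arccos ((inner ℝ x y : ℝ)) / 2) := by
  -- notation
  set σ' : Measure (sphere (0:E3) 1) := (volume : Measure E3).toSphere with hσ'
  set m : sphere (0:E3) 1 → ℝ :=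
    fun z => min (inner ℝ x (z:E3) : ℝ) (inner ℝ y (z:E3) : ℝ) with hm
  have hinner_bound : ∀ (v : E3), ‖v‖ = 1 → ∀ z : sphere (0:E3) 1,
      -1 ≤ (inner ℝ v (z:E3) : ℝ) ∧ (inner ℝ v (z:E3) : ℝ) ≤ 1 := by
    intro v hv z
    have hz : ‖(z:E3)‖ = 1 := by
      have := z.2
      rwa [mem_sphere_zero_iff_norm] at this
    have := abs_real_inner_le_norm v (z:E3)
    rw [hv, hz, mul_one] at this
    constructor <;> [linarith [neg_abs_le (inner ℝ v (z:E3) : ℝ)]; linarith [le_abs_self (inner ℝ v (z:E3) : ℝ)]]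
  have hm_bound : ∀ z, -1 ≤ m z ∧ m z ≤ 1 := by
    intro z
    obtain ⟨h1, h2⟩ := hinner_bound x hx z
    obtain ⟨h3, h4⟩ := hinner_bound y hy z
    exact ⟨le_min h1 h3, min_le_of_left_le h2⟩
  have hm_cont : Continuous m :=
    ((continuous_const.inner continuous_subtype_val).min
      (continuous_const.inner continuous_subtype_val))
  -- the event as a preimage
  have hcos : Measurable (fun ω => Real.cos (R ω)) := Real.measurable_cos.comp hR
  set S : Set (sphere (0:E3) 1 × ℝ) := {p | p.2 ≤ m p.1} with hS
  have hSm : MeasurableSet S :=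
    measurableSet_le measurable_snd (hm_cont.measurable.comp measurable_fst)
  have hevent : {ω | Real.arccos (inner ℝ x ((X ω : E3)) : ℝ) ≤ R ω ∧
        Real.arccos (inner ℝ y ((X ω : E3)) : ℝ) ≤ R ω}
      = (fun ω => (X ω, Real.cos (R ω))) ⁻¹' S := by
    ext ω
    obtain ⟨hr0, hrπ⟩ := hRrange ω
    obtain ⟨ha1, ha2⟩ := hinner_bound x hx (X ω)
    obtain ⟨hb1, hb2⟩ := hinner_bound y hy (X ω)
    simp only [mem_setOf_eq, mem_preimage, hS, hm, le_min_iff]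
    rw [arccos_le_iff_cos_le ha1 ha2 hr0 hrπ, arccos_le_iff_cos_le hb1 hb2 hr0 hrπ]
  rw [hevent, ← Measure.map_apply (hX.prodMk hcos) hSm,
    (indepFun_iff_map_prod_eq_prod_map_map hX.aemeasurable hcos.aemeasurable).1
      (hindep.comp measurable_id Real.measurable_cos),
    hXunif, hRunif]
  -- compute the product measure of S
  haveI hνP : IsProbabilityMeasure ((2 : ENNReal)⁻¹ • volume.restrict (Icc (-1:ℝ) 1)) := by
    rw [← hRunif]; exact Measure.isProbabilityMeasure_map hcos.aemeasurable
  have hinteg : ∀ f : sphere (0:E3) 1 → ℝ, Continuous f → Integrable f σ' := fun f hf =>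
    hf.integrable_of_hasCompactSupport (HasCompactSupport.of_compactSpace f)
  have hsec : ∀ z : sphere (0:E3) 1, Prod.mk z ⁻¹' S = Iic (m z) := by
    intro z; ext u; simp [hS, mem_Iic]
  have hν : ∀ z : sphere (0:E3) 1,
      ((2 : ENNReal)⁻¹ • volume.restrict (Icc (-1:ℝ) 1)) (Iic (m z))
        = 2⁻¹ * ENNReal.ofReal (m z + 1) := by
    intro z
    obtain ⟨h1, h2⟩ := hm_bound z
    rw [Measure.smul_apply, smul_eq_mul, Measure.restrict_apply measurableSet_Iic]
    congr 1
    rw [show Iic (m z) ∩ Icc (-1:ℝ) 1 = Icc (-1) (m z) from by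
      ext u; simp only [mem_inter_iff, mem_Iic, mem_Icc]
      constructor
      · rintro ⟨hu, hv, _⟩; exact ⟨hv, hu⟩
      · rintro ⟨hu, hv⟩; exact ⟨hv, hu, hv.trans h2⟩]
    rw [Real.volume_Icc]
    congr 1; ring
  rw [Measure.prod_apply hSm]
  simp only [hsec]
  rw [lintegral_smul_measure]
  simp only [hν]
  rw [lintegral_const_mul _ (((hm_cont.measurable).add_const 1).ennreal_ofReal)]
  -- convert the lintegral to a Bochner integral
  have hint_m1 : Integrable (fun z => m z + 1) σ' :=
    hinteg _ (hm_cont.add continuous_const)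
  have hlint : ∫⁻ z, ENNReal.ofReal (m z + 1) ∂σ'
      = ENNReal.ofReal (∫ z, (m z + 1) ∂σ') := by
    rw [← ofReal_integral_eq_lintegral_ofReal hint_m1
      (Filter.Eventually.of_forall (fun z => by
        show (0:ℝ) ≤ m z + 1; linarith [(hm_bound z).1]))]
  rw [hlint]
  -- compute the integral
  have habs : ∀ z : sphere (0:E3) 1, m z
      = (((inner ℝ x (z:E3) : ℝ) + (inner ℝ y (z:E3) : ℝ)) - |(inner ℝ (x - y) (z:E3) : ℝ)|)/2 := by
    intro z
    have hz : (inner ℝ (x - y) (z:E3) : ℝ) = (inner ℝ x (z:E3) : ℝ) - (inner ℝ y (z:E3) : ℝ) :=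
      inner_sub_left x y (z:E3)
    rw [hz]
    show min ((inner ℝ x (z:E3) : ℝ)) ((inner ℝ y (z:E3) : ℝ)) = _
    rcases le_total ((inner ℝ x (z:E3) : ℝ)) ((inner ℝ y (z:E3) : ℝ)) with h | h
    · rw [min_eq_left h, abs_of_nonpos (by linarith)]; ring
    · rw [min_eq_right h, abs_of_nonneg (by linarith)]; ring
  have hintm : ∫ z, m z ∂σ' = - (π * ‖x - y‖) := by
    rw [integral_congr_ae (Filter.Eventually.of_forall habs)]
    have hA : Integrable (fun z : sphere (0:E3) 1 => (inner ℝ x (z:E3) : ℝ)) σ' :=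
      hinteg _ (continuous_const.inner continuous_subtype_val)
    have hB : Integrable (fun z : sphere (0:E3) 1 => (inner ℝ y (z:E3) : ℝ)) σ' :=
      hinteg _ (continuous_const.inner continuous_subtype_val)
    have hC : Integrable (fun z : sphere (0:E3) 1 => |(inner ℝ (x - y) (z:E3) : ℝ)|) σ' :=
      hinteg _ ((continuous_const.inner continuous_subtype_val).abs)
    rw [show (fun z : sphere (0:E3) 1 =>
        (((inner ℝ x (z:E3) : ℝ) + (inner ℝ y (z:E3) : ℝ)) - |(inner ℝ (x - y) (z:E3) : ℝ)|)/2)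
      = (fun z : sphere (0:E3) 1 =>
        (((inner ℝ x (z:E3) : ℝ) + (inner ℝ y (z:E3) : ℝ)) - |(inner ℝ (x - y) (z:E3) : ℝ)|) * (1/2)) from by
      ext z; ring]
    have hAB : Integrable (fun z : sphere (0:E3) 1 =>
        (inner ℝ x (z:E3) : ℝ) + (inner ℝ y (z:E3) : ℝ)) σ' := hA.add hB
    rw [integral_mul_const, integral_sub hAB hC, integral_add hA hB,
      sphere_inner_zero x, sphere_inner_zero y, sphere_inner_abs (x - y)]
    ring
  have hσ'univ : (σ' univ).toReal = 4 * π := by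
    rw [hσ', toSphere_univ_E3, ENNReal.toReal_ofReal (by positivity)]
  have hintm1 : ∫ z, (m z + 1) ∂σ' = π * (4 - ‖x - y‖) := by
    rw [integral_add (hinteg _ hm_cont) (integrable_const 1), hintm, integral_const,
      smul_eq_mul, mul_one, measureReal_def, hσ'univ]
    ring
  rw [hintm1, toSphere_univ_E3]
  -- numerics
  have hd2 : ‖x - y‖^2 = 2 - 2 * (inner ℝ x y : ℝ) := by
    rw [norm_sub_sq_real, hx, hy]; ring
  have hd_nonneg : (0:ℝ) ≤ ‖x - y‖ := norm_nonneg _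
  have hd_le : ‖x - y‖ ≤ 2 := by
    nlinarith [hd2, abs_real_inner_le_norm x y, hx, hy, le_abs_self (inner ℝ x y : ℝ),
      neg_abs_le (inner ℝ x y : ℝ)]
  have htoReal : ((ENNReal.ofReal (4 * π))⁻¹ * (2⁻¹ * ENNReal.ofReal (π * (4 - ‖x - y‖)))).toReal
      = (4 - ‖x - y‖)/8 := by
    rw [ENNReal.toReal_mul, ENNReal.toReal_mul, ENNReal.toReal_inv, ENNReal.toReal_inv,
      ENNReal.toReal_ofReal (by positivity),
      ENNReal.toReal_ofReal (by nlinarith [pi_pos]), ENNReal.toReal_ofNat]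
    field_simp
    ring
  rw [smul_eq_mul, htoReal]
  -- trig identity
  have ht1 : -1 ≤ (inner ℝ x y : ℝ) := by
    nlinarith [abs_real_inner_le_norm x y, neg_abs_le (inner ℝ x y : ℝ), hx, hy]
  have ht2 : (inner ℝ x y : ℝ) ≤ 1 := by
    nlinarith [abs_real_inner_le_norm x y, le_abs_self (inner ℝ x y : ℝ), hx, hy]
  have hsin : Real.sin (Real.arccos (inner ℝ x y : ℝ) / 2)
      = Real.sqrt ((1 - (inner ℝ x y : ℝ))/2) := by
    rw [Real.sin_half_eq_sqrt (Real.arccos_nonneg _)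
      (by linarith [Real.arccos_le_pi (inner ℝ x y : ℝ), pi_pos]),
      Real.cos_arccos ht1 ht2]
  have hd : ‖x - y‖ = 2 * Real.sqrt ((1 - (inner ℝ x y : ℝ))/2) := by
    rw [show (2:ℝ) * Real.sqrt ((1 - (inner ℝ x y : ℝ))/2)
        = Real.sqrt 4 * Real.sqrt ((1 - (inner ℝ x y : ℝ))/2) from by
      rw [show (4:ℝ) = 2^2 from by norm_num, Real.sqrt_sq (by norm_num)],
      ← Real.sqrt_mul (by norm_num)]
    rw [← Real.sqrt_sq hd_nonneg, hd2]
    congr 1; ring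
  rw [hsin, hd]
  ring


end
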